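/- Let a DMIC have transition probability factorizing as p(y1,y2|x1,x2) = p(y2|x1,x2) q(y1|x1,y2) (Markov chain X2 - (X1,Y2) - Y1). Then for every finite-valued random variable U with joint law p(u,x1,x2,y1,y2) = p(u) p(x1,x2|u) p(y1,y2|x1,x2), it holds that I(U;Y1|X1) <= I(U;Y2|X1). -/

import Mathlib

open scoped BigOperators

noncomputable section

namespace IT

/-- A probability mass function on a finite type. -/
def IsPMF {α : Type*} [Fintype α] (p : α → ℝ) : Prop :=
  (∀ a, 0 ≤ p a) ∧ ∑ a, p a = 1

/-- The distribution (pushforward) of a random variable `X` under the pmf `μ`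
on the sample space `Ω`. -/
def distOf {Ω α : Type*} [Fintype Ω] [DecidableEq α] (μ : Ω → ℝ) (X : Ω → α) : α → ℝ :=
  fun a => ∑ ω, if X ω = a then μ ω else 0

/-- Shannon entropy (base-2 logarithms) of a pmf on a finite type.
(Recall `Real.logb 2 0 = 0`, so the `0 log 0 = 0` convention is automatic.) -/
def ent {α : Type*} [Fintype α] (p : α → ℝ) : ℝ := -∑ a, p a * Real.logb 2 (p a)

/-- Entropy `H(X)` of a finite-valued random variable `X` on `(Ω, μ)`. -/
def H {Ω α : Type*} [Fintype Ω] [Fintype α] [DecidableEq α] (μ : Ω → ℝ) (X : Ω → α) : ℝ :=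
  ent (distOf μ X)

/-- Mutual information `I(X;Y)`. -/
def MI {Ω α β : Type*} [Fintype Ω] [Fintype α] [DecidableEq α] [Fintype β] [DecidableEq β]
    (μ : Ω → ℝ) (X : Ω → α) (Y : Ω → β) : ℝ :=
  H μ X + H μ Y - H μ (fun ω => (X ω, Y ω))

/-- Conditional mutual information `I(X;Y|Z)`. -/
def CMI {Ω α β γ : Type*} [Fintype Ω] [Fintype α] [DecidableEq α] [Fintype β] [DecidableEq β]
    [Fintype γ] [DecidableEq γ] (μ : Ω → ℝ) (X : Ω → α) (Y : Ω → β) (Z : Ω → γ) : ℝ :=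
  H μ (fun ω => (X ω, Z ω)) + H μ (fun ω => (Y ω, Z ω))
    - H μ (fun ω => (X ω, Y ω, Z ω)) - H μ Z

/-- `B` is conditionally independent of `A` given `C` (a Markov chain `A - C - B`). -/
def CondIndep {Ω α β γ : Type*} [Fintype Ω] [DecidableEq α] [DecidableEq β] [DecidableEq γ]
    (μ : Ω → ℝ) (A : Ω → α) (B : Ω → β) (C : Ω → γ) : Prop :=
  ∀ a b c,
    distOf μ (fun ω => (A ω, B ω, C ω)) (a, b, c) * distOf μ C c =
      distOf μ (fun ω => (A ω, C ω)) (a, c) * distOf μ (fun ω => (B ω, C ω)) (b, c)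

variable {A1 A2 B1 B2 : Type*}

/-- A discrete memoryless interference channel with input alphabets `A1, A2` and
output alphabets `B1, B2`: every pair of inputs yields a pmf on output pairs. -/
def IsChannel [Fintype B1] [Fintype B2] (W : A1 → A2 → B1 × B2 → ℝ) : Prop :=
  ∀ x1 x2, IsPMF (W x1 x2)

/-- DMZIC with weak interference: the transition probability factorizes as
`p(y1,y2|x1,x2) = p(y2|x2) q(y1|x1,y2)`, i.e. one-sided interference together with
the Markov chain `X2 - (X1,Y2) - Y1`. -/
def WeakZ [Fintype B1] [Fintype B2] (W : A1 → A2 → B1 × B2 → ℝ) : Prop :=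
  ∃ (p2 : A2 → B2 → ℝ) (q : A1 → B2 → B1 → ℝ),
    (∀ x2, IsPMF (p2 x2)) ∧ (∀ x1 y2, IsPMF (q x1 y2)) ∧
      ∀ x1 x2 y1 y2, W x1 x2 (y1, y2) = p2 x2 y2 * q x1 y2 y1

/-- Factorization `p(y1,y2|x1,x2) = p(y2|x1,x2) q(y1|x1,y2)`, i.e. the Markov chain
`X2 - (X1,Y2) - Y1`. -/
def ChainX2X1Y2Y1 [Fintype B1] [Fintype B2] (W : A1 → A2 → B1 × B2 → ℝ) : Prop :=
  ∃ (pa : A1 → A2 → B2 → ℝ) (q : A1 → B2 → B1 → ℝ),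
    (∀ x1 x2, IsPMF (pa x1 x2)) ∧ (∀ x1 y2, IsPMF (q x1 y2)) ∧
      ∀ x1 x2 y1 y2, W x1 x2 (y1, y2) = pa x1 x2 y2 * q x1 y2 y1

/-- The `n`-fold memoryless extension of the channel `W`. -/
def nFold (W : A1 → A2 → B1 × B2 → ℝ) (n : ℕ) (a : Fin n → A1) (b : Fin n → A2)
    (y : (Fin n → B1) × (Fin n → B2)) : ℝ :=
  ∏ i, W (a i) (b i) (y.1 i, y.2 i)

/-- An `(n, M1, M2)` code for the interference channel. -/
structure Code (A1 A2 B1 B2 : Type*) (n M1 M2 : ℕ) where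
  enc1 : Fin M1 → Fin n → A1
  enc2 : Fin M2 → Fin n → A2
  dec1 : (Fin n → B1) → Fin M1
  dec2 : (Fin n → B2) → Fin M2

/-- Average probability of error at receiver 1 (messages uniform and independent). -/
def err1 [Fintype B1] [Fintype B2] (W : A1 → A2 → B1 × B2 → ℝ) {n M1 M2 : ℕ}
    (c : Code A1 A2 B1 B2 n M1 M2) : ℝ :=
  ((M1 : ℝ) * (M2 : ℝ))⁻¹ *
    ∑ w1 : Fin M1, ∑ w2 : Fin M2, ∑ y : (Fin n → B1) × (Fin n → B2),
      if c.dec1 y.1 ≠ w1 then nFold W n (c.enc1 w1) (c.enc2 w2) y else 0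

/-- Average probability of error at receiver 2 (messages uniform and independent). -/
def err2 [Fintype B1] [Fintype B2] (W : A1 → A2 → B1 × B2 → ℝ) {n M1 M2 : ℕ}
    (c : Code A1 A2 B1 B2 n M1 M2) : ℝ :=
  ((M1 : ℝ) * (M2 : ℝ))⁻¹ *
    ∑ w1 : Fin M1, ∑ w2 : Fin M2, ∑ y : (Fin n → B1) × (Fin n → B2),
      if c.dec2 y.2 ≠ w2 then nFold W n (c.enc1 w1) (c.enc2 w2) y else 0

/-- A (nonnegative) rate pair `(R1, R2)` is achievable if there are codes of blocklength `n`,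
with at least `2 ^ (n R1)` and `2 ^ (n R2)` messages, whose average error probabilities at
the two receivers can be made arbitrarily small. -/
def Achievable [Fintype B1] [Fintype B2] (W : A1 → A2 → B1 × B2 → ℝ) (R1 R2 : ℝ) : Prop :=
  0 ≤ R1 ∧ 0 ≤ R2 ∧ ∀ ε : ℝ, 0 < ε →
    ∃ (n M1 M2 : ℕ) (c : Code A1 A2 B1 B2 n M1 M2), 0 < n ∧
      (2 : ℝ) ^ ((n : ℝ) * R1) ≤ (M1 : ℝ) ∧ (2 : ℝ) ^ ((n : ℝ) * R2) ≤ (M2 : ℝ) ∧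
      err1 W c ≤ ε ∧ err2 W c ≤ ε

/-- The sum-rate capacity: the supremum of `R1 + R2` over achievable rate pairs. -/
def sumCapacity [Fintype B1] [Fintype B2] (W : A1 → A2 → B1 × B2 → ℝ) : ℝ :=
  sSup {r : ℝ | ∃ R1 R2 : ℝ, Achievable W R1 R2 ∧ r = R1 + R2}

/-- The capacity region: the closure of the set of achievable rate pairs. -/
def capacityRegion [Fintype B1] [Fintype B2] (W : A1 → A2 → B1 × B2 → ℝ) : Set (ℝ × ℝ) :=
  closure {p : ℝ × ℝ | Achievable W p.1 p.2}

/-- The joint pmf of `(X1, X2, Y1, Y2)` when the product input `p1 × p2` is fed to `W`. -/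
def jointOf (W : A1 → A2 → B1 × B2 → ℝ) (p1 : A1 → ℝ) (p2 : A2 → ℝ) :
    A1 × A2 × B1 × B2 → ℝ :=
  fun z => p1 z.1 * p2 z.2.1 * W z.1 z.2.1 (z.2.2.1, z.2.2.2)

/-- Coordinate projections on `A1 × A2 × B1 × B2`. -/
def pX1 : A1 × A2 × B1 × B2 → A1 := fun z => z.1
def pX2 : A1 × A2 × B1 × B2 → A2 := fun z => z.2.1
def pY1 : A1 × A2 × B1 × B2 → B1 := fun z => z.2.2.1
def pY2 : A1 × A2 × B1 × B2 → B2 := fun z => z.2.2.2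

/-- The binary entropy function (base-2 logarithms). -/
def h2 (t : ℝ) : ℝ := -(t * Real.logb 2 t) - (1 - t) * Real.logb 2 (1 - t)

end IT

namespace IT

set_option linter.unusedSectionVars false
set_option maxHeartbeats 1000000

section Lemmas
variable {Ω α β γ : Type*} [Fintype Ω] [Fintype α] [DecidableEq α] [Fintype β] [DecidableEq β]
  [Fintype γ] [DecidableEq γ] {μ : Ω → ℝ}

lemma distOf_nonneg' (hμ : ∀ ω, 0 ≤ μ ω) (X : Ω → α) (a : α) : 0 ≤ distOf μ X a := by
  apply Finset.sum_nonneg; intro ω _; split <;> simp [hμ ω]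

lemma sum_distOf_mul' (X : Ω → α) (f : α → ℝ) :
    ∑ a, distOf μ X a * f a = ∑ ω, μ ω * f (X ω) := by
  simp only [distOf, Finset.sum_mul, ite_mul, zero_mul]
  rw [Finset.sum_comm]
  refine Finset.sum_congr rfl fun ω _ => ?_
  simp

lemma le_distOf' (hμ : ∀ ω, 0 ≤ μ ω) (X : Ω → α) (ω : Ω) : μ ω ≤ distOf μ X (X ω) := by
  have := Finset.single_le_sum (f := fun ω' => if X ω' = X ω then μ ω' else 0)
    (fun ω' _ => by split <;> simp [hμ ω']) (Finset.mem_univ ω)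
  simpa [distOf] using this

lemma sum_distOf' (X : Ω → α) : ∑ a, distOf μ X a = ∑ ω, μ ω := by
  have := sum_distOf_mul' (μ := μ) X (fun _ => 1)
  simpa using this

lemma distOf_snd' (X : Ω → α) (Y : Ω → β) (b : β) :
    ∑ a, distOf μ (fun ω => (X ω, Y ω)) (a, b) = distOf μ Y b := by
  simp only [distOf]
  rw [Finset.sum_comm]
  refine Finset.sum_congr rfl fun ω _ => ?_
  by_cases h : Y ω = b <;> simp [Prod.ext_iff, h]

lemma distOf_third' (X : Ω → α) (Y : Ω → β) (Z : Ω → γ) (c : γ) :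
    ∑ ab : α × β, distOf μ (fun ω => (X ω, Y ω, Z ω)) (ab.1, ab.2, c) = distOf μ Z c := by
  simp only [distOf]
  rw [Finset.sum_comm]
  refine Finset.sum_congr rfl fun ω _ => ?_
  by_cases h : Z ω = c
  · simp [Prod.ext_iff, h, Fintype.sum_prod_type, ite_and, Finset.sum_ite_eq]
  · simp [Prod.ext_iff, h]

lemma H_eq' (X : Ω → α) : H μ X = -∑ ω, μ ω * Real.logb 2 (distOf μ X (X ω)) := by
  rw [H, ent, sum_distOf_mul' X (fun a => Real.logb 2 (distOf μ X a))]

lemma H_comp_equiv' (e : α ≃ β) (X : Ω → α) : H μ (fun ω => e (X ω)) = H μ X := by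
  have hd : ∀ b, distOf μ (fun ω => e (X ω)) b = distOf μ X (e.symm b) := by
    intro b
    refine Finset.sum_congr rfl fun ω _ => ?_
    congr 1
    simp [Equiv.eq_symm_apply, eq_comm]
  rw [H, H, ent, ent]
  simp only [hd]
  exact congrArg Neg.neg
    (Equiv.sum_comp e.symm (fun a => distOf μ X a * Real.logb 2 (distOf μ X a)))

lemma H_comp_eq' (e : α ≃ β) (X : Ω → α) (Y : Ω → β) (hXY : ∀ ω, Y ω = e (X ω)) :
    H μ Y = H μ X := by
  have : Y = fun ω => e (X ω) := funext hXY
  rw [this, H_comp_equiv']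

lemma CMI_nonneg' (hμ0 : ∀ ω, 0 ≤ μ ω) (hμ1 : ∑ ω, μ ω = 1)
    (X : Ω → α) (Y : Ω → β) (Z : Ω → γ) : 0 ≤ CMI μ X Y Z := by
  classical
  set pXZ := distOf μ (fun ω => (X ω, Z ω)) with hpXZ
  set pYZ := distOf μ (fun ω => (Y ω, Z ω)) with hpYZ
  set pT := distOf μ (fun ω => (X ω, Y ω, Z ω)) with hpT
  set pZ := distOf μ Z with hpZ
  set f : α × β × γ → ℝ :=
    fun t => pXZ (t.1, t.2.2) * pYZ (t.2.1, t.2.2) / (pT t * pZ t.2.2) with hf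
  have hlog2 : (0:ℝ) < Real.log 2 := Real.log_pos (by norm_num)
  have key : ∀ ω, μ ω * (Real.logb 2 (pXZ (X ω, Z ω)) + Real.logb 2 (pYZ (Y ω, Z ω))
      - Real.logb 2 (pT (X ω, Y ω, Z ω)) - Real.logb 2 (pZ (Z ω)))
      ≤ μ ω * ((f (X ω, Y ω, Z ω) - 1) / Real.log 2) := by
    intro ω
    rcases eq_or_lt_of_le (hμ0 ω) with h0 | h0
    · simp [← h0]
    · have hT : 0 < pT (X ω, Y ω, Z ω) :=
        lt_of_lt_of_le h0 (le_distOf' hμ0 (fun ω => (X ω, Y ω, Z ω)) ω)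
      have hXZ : 0 < pXZ (X ω, Z ω) :=
        lt_of_lt_of_le h0 (le_distOf' hμ0 (fun ω => (X ω, Z ω)) ω)
      have hYZ : 0 < pYZ (Y ω, Z ω) :=
        lt_of_lt_of_le h0 (le_distOf' hμ0 (fun ω => (Y ω, Z ω)) ω)
      have hZ : 0 < pZ (Z ω) := lt_of_lt_of_le h0 (le_distOf' hμ0 Z ω)
      have hr : 0 < f (X ω, Y ω, Z ω) := by
        rw [hf]; positivity
      have hlog : Real.log (f (X ω, Y ω, Z ω)) ≤ f (X ω, Y ω, Z ω) - 1 :=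
        Real.log_le_sub_one_of_pos hr
      have hsum : Real.logb 2 (pXZ (X ω, Z ω)) + Real.logb 2 (pYZ (Y ω, Z ω))
          - Real.logb 2 (pT (X ω, Y ω, Z ω)) - Real.logb 2 (pZ (Z ω))
          = Real.log (f (X ω, Y ω, Z ω)) / Real.log 2 := by
        rw [hf]
        simp only [Real.logb]
        rw [Real.log_div (by positivity) (by positivity),
            Real.log_mul (ne_of_gt hXZ) (ne_of_gt hYZ),
            Real.log_mul (ne_of_gt hT) (ne_of_gt hZ)]
        ring
      rw [hsum]
      exact mul_le_mul_of_nonneg_left ((div_le_div_iff_of_pos_right hlog2).mpr hlog)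
        (le_of_lt h0)
  have hgroup : ∑ ω, μ ω * f (X ω, Y ω, Z ω) = ∑ t, pT t * f t :=
    (sum_distOf_mul' (fun ω => (X ω, Y ω, Z ω)) f).symm
  have hb1 : ∀ t : α × β × γ, pT t * f t ≤ pXZ (t.1, t.2.2) * pYZ (t.2.1, t.2.2) / pZ t.2.2 := by
    intro t
    rcases eq_or_lt_of_le (show 0 ≤ pT t from distOf_nonneg' hμ0 _ _) with h0 | h0
    · rw [← h0, zero_mul]
      exact div_nonneg (mul_nonneg (distOf_nonneg' hμ0 _ _) (distOf_nonneg' hμ0 _ _))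
        (distOf_nonneg' hμ0 _ _)
    · have hZ : 0 < pZ t.2.2 := by
        have h1 : pT t ≤ pZ t.2.2 := by
          calc pT t = pT ((t.1, t.2.1).1, (t.1, t.2.1).2, t.2.2) := by rfl
            _ ≤ ∑ ab : α × β, pT (ab.1, ab.2, t.2.2) :=
                Finset.single_le_sum (f := fun ab : α × β => pT (ab.1, ab.2, t.2.2))
                  (fun ab _ => distOf_nonneg' hμ0 _ _) (Finset.mem_univ (t.1, t.2.1))
            _ = pZ t.2.2 := distOf_third' X Y Z t.2.2
        linarith
      have heq : pT t * f t = pXZ (t.1, t.2.2) * pYZ (t.2.1, t.2.2) / pZ t.2.2 := by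
        rw [hf]
        field_simp
      rw [heq]
  have hb2 : ∑ t : α × β × γ, pXZ (t.1, t.2.2) * pYZ (t.2.1, t.2.2) / pZ t.2.2 ≤ 1 := by
    have hre : ∑ t : α × β × γ, pXZ (t.1, t.2.2) * pYZ (t.2.1, t.2.2) / pZ t.2.2
        = ∑ c, (∑ a, pXZ (a, c)) * (∑ b, pYZ (b, c)) / pZ c := by
      rw [Fintype.sum_prod_type]
      simp only [Fintype.sum_prod_type]
      have hswap : ∀ a : α, ∑ b, ∑ c, pXZ (a, c) * pYZ (b, c) / pZ c
          = ∑ c, ∑ b, pXZ (a, c) * pYZ (b, c) / pZ c := fun a => Finset.sum_comm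
      simp only [hswap]
      rw [Finset.sum_comm]
      refine Finset.sum_congr rfl fun c _ => ?_
      rw [Finset.sum_mul, Finset.sum_div]
      refine Finset.sum_congr rfl fun a _ => ?_
      rw [Finset.mul_sum, Finset.sum_div]
    rw [hre]
    have hle : ∀ c, (∑ a, pXZ (a, c)) * (∑ b, pYZ (b, c)) / pZ c ≤ pZ c := by
      intro c
      rw [distOf_snd' X Z c, distOf_snd' Y Z c]
      rcases eq_or_lt_of_le (show 0 ≤ pZ c from distOf_nonneg' hμ0 _ _) with h0 | h0
      · rw [← h0]; simp
      · rw [mul_div_assoc, div_self (ne_of_gt h0), mul_one]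
    calc _ ≤ ∑ c, pZ c := Finset.sum_le_sum fun c _ => hle c
      _ = 1 := by rw [hpZ, sum_distOf', hμ1]
  have hfin : ∑ ω, μ ω * (Real.logb 2 (pXZ (X ω, Z ω)) + Real.logb 2 (pYZ (Y ω, Z ω))
      - Real.logb 2 (pT (X ω, Y ω, Z ω)) - Real.logb 2 (pZ (Z ω))) ≤ 0 := by
    calc _ ≤ ∑ ω, μ ω * ((f (X ω, Y ω, Z ω) - 1) / Real.log 2) :=
          Finset.sum_le_sum fun ω _ => key ω
      _ = (∑ ω, μ ω * f (X ω, Y ω, Z ω) - ∑ ω, μ ω) / Real.log 2 := by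
          rw [← Finset.sum_sub_distrib, Finset.sum_div]
          exact Finset.sum_congr rfl fun ω _ => by ring
      _ = (∑ ω, μ ω * f (X ω, Y ω, Z ω) - 1) / Real.log 2 := by rw [hμ1]
      _ ≤ 0 := by
          apply div_nonpos_of_nonpos_of_nonneg _ (le_of_lt hlog2)
          rw [hgroup]
          have := le_trans (Finset.sum_le_sum fun t (_ : t ∈ Finset.univ) => hb1 t) hb2
          linarith
  have hCMI : CMI μ X Y Z = -∑ ω, μ ω * (Real.logb 2 (pXZ (X ω, Z ω))
      + Real.logb 2 (pYZ (Y ω, Z ω)) - Real.logb 2 (pT (X ω, Y ω, Z ω))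
      - Real.logb 2 (pZ (Z ω))) := by
    rw [CMI, H_eq', H_eq', H_eq', H_eq']
    rw [show ∀ S1 S2 S3 S4 : ℝ, -S1 + -S2 - -S3 - -S4 = -(S1 + S2 - S3 - S4) from
      fun _ _ _ _ => by ring]
    congr 1
    rw [← Finset.sum_add_distrib, ← Finset.sum_sub_distrib, ← Finset.sum_sub_distrib]
    refine Finset.sum_congr rfl fun ω _ => ?_
    rw [← hpXZ, ← hpYZ, ← hpT, ← hpZ]
    ring
  rw [hCMI]
  linarith

lemma CMI_eq_zero' (hμ0 : ∀ ω, 0 ≤ μ ω)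
    (X : Ω → α) (Y : Ω → β) (Z : Ω → γ)
    (h : ∀ a b c, distOf μ (fun ω => (X ω, Y ω, Z ω)) (a, b, c) * distOf μ Z c =
      distOf μ (fun ω => (X ω, Z ω)) (a, c) * distOf μ (fun ω => (Y ω, Z ω)) (b, c)) :
    CMI μ X Y Z = 0 := by
  classical
  set pXZ := distOf μ (fun ω => (X ω, Z ω)) with hpXZ
  set pYZ := distOf μ (fun ω => (Y ω, Z ω)) with hpYZ
  set pT := distOf μ (fun ω => (X ω, Y ω, Z ω)) with hpT
  set pZ := distOf μ Z with hpZ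
  have key : ∀ ω, μ ω * (Real.logb 2 (pXZ (X ω, Z ω)) + Real.logb 2 (pYZ (Y ω, Z ω))
      - Real.logb 2 (pT (X ω, Y ω, Z ω)) - Real.logb 2 (pZ (Z ω))) = 0 := by
    intro ω
    rcases eq_or_lt_of_le (hμ0 ω) with h0 | h0
    · rw [← h0, zero_mul]
    · have hT : 0 < pT (X ω, Y ω, Z ω) :=
        lt_of_lt_of_le h0 (le_distOf' hμ0 (fun ω => (X ω, Y ω, Z ω)) ω)
      have hXZ : 0 < pXZ (X ω, Z ω) :=
        lt_of_lt_of_le h0 (le_distOf' hμ0 (fun ω => (X ω, Z ω)) ω)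
      have hYZ : 0 < pYZ (Y ω, Z ω) :=
        lt_of_lt_of_le h0 (le_distOf' hμ0 (fun ω => (Y ω, Z ω)) ω)
      have hZ : 0 < pZ (Z ω) := lt_of_lt_of_le h0 (le_distOf' hμ0 Z ω)
      have hlogs : Real.logb 2 (pT (X ω, Y ω, Z ω)) + Real.logb 2 (pZ (Z ω))
          = Real.logb 2 (pXZ (X ω, Z ω)) + Real.logb 2 (pYZ (Y ω, Z ω)) := by
        rw [← Real.logb_mul (ne_of_gt hT) (ne_of_gt hZ),
            ← Real.logb_mul (ne_of_gt hXZ) (ne_of_gt hYZ)]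
        rw [h (X ω) (Y ω) (Z ω)]
      have hz : Real.logb 2 (pXZ (X ω, Z ω)) + Real.logb 2 (pYZ (Y ω, Z ω))
          - Real.logb 2 (pT (X ω, Y ω, Z ω)) - Real.logb 2 (pZ (Z ω)) = 0 := by linarith
      rw [hz, mul_zero]
  have hCMI : CMI μ X Y Z = -∑ ω, μ ω * (Real.logb 2 (pXZ (X ω, Z ω))
      + Real.logb 2 (pYZ (Y ω, Z ω)) - Real.logb 2 (pT (X ω, Y ω, Z ω))
      - Real.logb 2 (pZ (Z ω))) := by
    rw [CMI, H_eq', H_eq', H_eq', H_eq']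
    rw [show ∀ S1 S2 S3 S4 : ℝ, -S1 + -S2 - -S3 - -S4 = -(S1 + S2 - S3 - S4) from
      fun _ _ _ _ => by ring]
    congr 1
    rw [← Finset.sum_add_distrib, ← Finset.sum_sub_distrib, ← Finset.sum_sub_distrib]
    refine Finset.sum_congr rfl fun ω _ => ?_
    rw [← hpXZ, ← hpYZ, ← hpT, ← hpZ]
    ring
  rw [hCMI]
  simp only [key, Finset.sum_const_zero, neg_zero]

end Lemmas

section Main
variable {U A1 A2 B1 B2 : Type} [Fintype U] [DecidableEq U] [Fintype A1] [DecidableEq A1]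
  [Fintype A2] [DecidableEq A2] [Fintype B1] [DecidableEq B1] [Fintype B2] [DecidableEq B2]

lemma main_aux (W : A1 → A2 → B1 × B2 → ℝ) (hW : IsChannel W) (hchain : ChainX2X1Y2Y1 W)
    (pIn : U × A1 × A2 → ℝ) (hpIn : IsPMF pIn) :
    CMI (fun z : U × A1 × A2 × B1 × B2 =>
        pIn (z.1, z.2.1, z.2.2.1) * W z.2.1 z.2.2.1 (z.2.2.2.1, z.2.2.2.2))
      (fun z => z.1) (fun z => z.2.2.2.1) (fun z => z.2.1)
      ≤ CMI (fun z : U × A1 × A2 × B1 × B2 =>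
        pIn (z.1, z.2.1, z.2.2.1) * W z.2.1 z.2.2.1 (z.2.2.2.1, z.2.2.2.2))
      (fun z => z.1) (fun z => z.2.2.2.2) (fun z => z.2.1) := by
  classical
  obtain ⟨pa, q, hpa, hq, hWf⟩ := hchain
  set M : U × A1 × A2 × B1 × B2 → ℝ := fun z =>
    pIn (z.1, z.2.1, z.2.2.1) * W z.2.1 z.2.2.1 (z.2.2.2.1, z.2.2.2.2) with hM
  have hμ0 : ∀ z, 0 ≤ M z := fun z => mul_nonneg (hpIn.1 _) ((hW _ _).1 _)
  have hWs : ∀ x1 x2, ∑ y1 : B1, ∑ y2 : B2, W x1 x2 (y1, y2) = 1 := by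
    intro x1 x2
    rw [← Fintype.sum_prod_type]
    exact (hW x1 x2).2
  have hμ1 : ∑ z, M z = 1 := by
    rw [hM]
    simp only [Fintype.sum_prod_type]
    have h1 : ∀ (u : U) (x1 : A1) (x2 : A2),
        ∑ y1 : B1, ∑ y2 : B2, pIn (u, x1, x2) * W x1 x2 (y1, y2) = pIn (u, x1, x2) := by
      intro u x1 x2
      simp only [← Finset.mul_sum]
      rw [hWs, mul_one]
    simp only [h1]
    have h2 := hpIn.2
    simp only [Fintype.sum_prod_type] at h2
    exact h2
  -- the four distOf computations for the Markov-zero step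
  set F : U → A1 → B2 → ℝ := fun a c1 c2 => ∑ x2, pIn (a, c1, x2) * pa c1 x2 c2 with hF
  have dT : ∀ (a : U) (b : B1) (c1 : A1) (c2 : B2),
      distOf M (fun z => (z.1, z.2.2.2.1, (z.2.1, z.2.2.2.2))) (a, b, (c1, c2))
        = F a c1 c2 * q c1 c2 b := by
    intro a b c1 c2
    have : distOf M (fun z => (z.1, z.2.2.2.1, (z.2.1, z.2.2.2.2))) (a, b, (c1, c2))
        = ∑ x2, pIn (a, c1, x2) * W c1 x2 (b, c2) := by
      simp only [hM, distOf, Fintype.sum_prod_type, Prod.mk.injEq, ite_and]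
      simp [Finset.sum_ite_eq, Finset.sum_ite_eq']
    rw [this, hF]
    simp only [hWf]
    rw [Finset.sum_mul]
    exact Finset.sum_congr rfl fun x2 _ => by ring
  have dUV : ∀ (a : U) (c1 : A1) (c2 : B2),
      distOf M (fun z => (z.1, (z.2.1, z.2.2.2.2))) (a, (c1, c2)) = F a c1 c2 := by
    intro a c1 c2
    have : distOf M (fun z => (z.1, (z.2.1, z.2.2.2.2))) (a, (c1, c2))
        = ∑ x2, ∑ y1, pIn (a, c1, x2) * W c1 x2 (y1, c2) := by
      simp only [hM, distOf, Fintype.sum_prod_type, Prod.mk.injEq, ite_and]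
      simp [Finset.sum_ite_eq, Finset.sum_ite_eq']
    rw [this, hF]
    refine Finset.sum_congr rfl fun x2 _ => ?_
    simp only [hWf]
    rw [← Finset.mul_sum]
    have : ∑ y1, pa c1 x2 c2 * q c1 c2 y1 = pa c1 x2 c2 := by
      rw [← Finset.mul_sum, (hq c1 c2).2, mul_one]
    rw [this]
  have dYV : ∀ (b : B1) (c1 : A1) (c2 : B2),
      distOf M (fun z => (z.2.2.2.1, (z.2.1, z.2.2.2.2))) (b, (c1, c2))
        = (∑ a, F a c1 c2) * q c1 c2 b := by
    intro b c1 c2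
    have : distOf M (fun z => (z.2.2.2.1, (z.2.1, z.2.2.2.2))) (b, (c1, c2))
        = ∑ a, ∑ x2, pIn (a, c1, x2) * W c1 x2 (b, c2) := by
      simp only [hM, distOf, Fintype.sum_prod_type, Prod.mk.injEq, ite_and]
      simp [Finset.sum_ite_eq, Finset.sum_ite_eq']
    rw [this, hF]
    rw [Finset.sum_mul]
    refine Finset.sum_congr rfl fun a _ => ?_
    simp only [hWf]
    rw [Finset.sum_mul]
    exact Finset.sum_congr rfl fun x2 _ => by ring
  have dV : ∀ (c1 : A1) (c2 : B2),
      distOf M (fun z => (z.2.1, z.2.2.2.2)) (c1, c2) = ∑ a, F a c1 c2 := by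
    intro c1 c2
    have : distOf M (fun z => (z.2.1, z.2.2.2.2)) (c1, c2)
        = ∑ a, ∑ x2, ∑ y1, pIn (a, c1, x2) * W c1 x2 (y1, c2) := by
      simp only [hM, distOf, Fintype.sum_prod_type, Prod.mk.injEq, ite_and]
      simp [Finset.sum_ite_eq, Finset.sum_ite_eq']
    rw [this, hF]
    refine Finset.sum_congr rfl fun a _ => ?_
    refine Finset.sum_congr rfl fun x2 _ => ?_
    simp only [hWf]
    rw [← Finset.mul_sum, ← Finset.mul_sum, (hq c1 c2).2, mul_one]
  -- Markov zero
  have hzero : CMI M (fun z => z.1) (fun z => z.2.2.2.1) (fun z => (z.2.1, z.2.2.2.2)) = 0 := by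
    apply CMI_eq_zero' hμ0
    intro a b c
    obtain ⟨c1, c2⟩ := c
    show distOf M (fun z => (z.1, z.2.2.2.1, (z.2.1, z.2.2.2.2))) (a, b, (c1, c2))
        * distOf M (fun z => (z.2.1, z.2.2.2.2)) (c1, c2)
      = distOf M (fun z => (z.1, (z.2.1, z.2.2.2.2))) (a, (c1, c2))
        * distOf M (fun z => (z.2.2.2.1, (z.2.1, z.2.2.2.2))) (b, (c1, c2))
    rw [dT, dUV, dYV, dV]
    ring
  -- nonnegativity
  have hnn : 0 ≤ CMI M (fun z => z.1) (fun z => z.2.2.2.2) (fun z => (z.2.1, z.2.2.2.1)) :=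
    CMI_nonneg' hμ0 hμ1 _ _ _
  -- relabeling equalities
  have E1 : H M (fun z : U × A1 × A2 × B1 × B2 => (z.2.2.2.2, (z.2.1, z.2.2.2.1)))
      = H M (fun z => (z.2.2.2.1, (z.2.1, z.2.2.2.2))) :=
    H_comp_eq' (μ := M) (⟨fun p => (p.2.2, p.2.1, p.1), fun p => (p.2.2, p.2.1, p.1),
      fun p => rfl, fun p => rfl⟩ : B1 × A1 × B2 ≃ B2 × A1 × B1)
      (fun z => (z.2.2.2.1, (z.2.1, z.2.2.2.2)))
      (fun z => (z.2.2.2.2, (z.2.1, z.2.2.2.1))) (fun ω => rfl)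
  have E2 : H M (fun z : U × A1 × A2 × B1 × B2 => (z.1, z.2.2.2.2, (z.2.1, z.2.2.2.1)))
      = H M (fun z => (z.1, z.2.2.2.1, (z.2.1, z.2.2.2.2))) :=
    H_comp_eq' (μ := M) (⟨fun p => (p.1, p.2.2.2, p.2.2.1, p.2.1),
      fun p => (p.1, p.2.2.2, p.2.2.1, p.2.1), fun p => rfl, fun p => rfl⟩ :
      U × B1 × A1 × B2 ≃ U × B2 × A1 × B1)
      (fun z => (z.1, z.2.2.2.1, (z.2.1, z.2.2.2.2)))
      (fun z => (z.1, z.2.2.2.2, (z.2.1, z.2.2.2.1))) (fun ω => rfl)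
  have E3 : H M (fun z : U × A1 × A2 × B1 × B2 => (z.2.2.2.1, z.2.1))
      = H M (fun z => (z.2.1, z.2.2.2.1)) :=
    H_comp_eq' (μ := M) (Equiv.prodComm A1 B1) (fun z => (z.2.1, z.2.2.2.1)) (fun z => (z.2.2.2.1, z.2.1)) (fun ω => rfl)
  have E4 : H M (fun z : U × A1 × A2 × B1 × B2 => (z.1, z.2.2.2.1, z.2.1))
      = H M (fun z => (z.1, z.2.1, z.2.2.2.1)) :=
    H_comp_eq' (μ := M) (⟨fun p => (p.1, p.2.2, p.2.1), fun p => (p.1, p.2.2, p.2.1),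
      fun p => rfl, fun p => rfl⟩ : U × A1 × B1 ≃ U × B1 × A1)
      (fun z => (z.1, z.2.1, z.2.2.2.1)) (fun z => (z.1, z.2.2.2.1, z.2.1)) (fun ω => rfl)
  have E5 : H M (fun z : U × A1 × A2 × B1 × B2 => (z.2.2.2.2, z.2.1))
      = H M (fun z => (z.2.1, z.2.2.2.2)) :=
    H_comp_eq' (μ := M) (Equiv.prodComm A1 B2) (fun z => (z.2.1, z.2.2.2.2)) (fun z => (z.2.2.2.2, z.2.1)) (fun ω => rfl)
  have E6 : H M (fun z : U × A1 × A2 × B1 × B2 => (z.1, z.2.2.2.2, z.2.1))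
      = H M (fun z => (z.1, z.2.1, z.2.2.2.2)) :=
    H_comp_eq' (μ := M) (⟨fun p => (p.1, p.2.2, p.2.1), fun p => (p.1, p.2.2, p.2.1),
      fun p => rfl, fun p => rfl⟩ : U × A1 × B2 ≃ U × B2 × A1)
      (fun z => (z.1, z.2.1, z.2.2.2.2)) (fun z => (z.1, z.2.2.2.2, z.2.1)) (fun ω => rfl)
  -- expand the CMIs
  have ex1 : CMI M (fun z => z.1) (fun z => z.2.2.2.1) (fun z => z.2.1)
      = H M (fun z => (z.1, z.2.1)) + H M (fun z => (z.2.2.2.1, z.2.1))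
        - H M (fun z => (z.1, z.2.2.2.1, z.2.1)) - H M (fun z => z.2.1) := rfl
  have ex2 : CMI M (fun z => z.1) (fun z => z.2.2.2.2) (fun z => z.2.1)
      = H M (fun z => (z.1, z.2.1)) + H M (fun z => (z.2.2.2.2, z.2.1))
        - H M (fun z => (z.1, z.2.2.2.2, z.2.1)) - H M (fun z => z.2.1) := rfl
  have ex3 : CMI M (fun z => z.1) (fun z => z.2.2.2.1) (fun z => (z.2.1, z.2.2.2.2))
      = H M (fun z => (z.1, z.2.1, z.2.2.2.2)) + H M (fun z => (z.2.2.2.1, (z.2.1, z.2.2.2.2)))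
        - H M (fun z => (z.1, z.2.2.2.1, (z.2.1, z.2.2.2.2)))
        - H M (fun z => (z.2.1, z.2.2.2.2)) := rfl
  have ex4 : CMI M (fun z => z.1) (fun z => z.2.2.2.2) (fun z => (z.2.1, z.2.2.2.1))
      = H M (fun z => (z.1, z.2.1, z.2.2.2.1)) + H M (fun z => (z.2.2.2.2, (z.2.1, z.2.2.2.1)))
        - H M (fun z => (z.1, z.2.2.2.2, (z.2.1, z.2.2.2.1)))
        - H M (fun z => (z.2.1, z.2.2.2.1)) := rfl
  rw [ex1, ex2]
  rw [ex3] at hzero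
  rw [ex4] at hnn
  linarith

end Main

/-- For a DMIC satisfying the Markov chain `X2 - (X1,Y2) - Y1`, for any
finite-valued `U` with joint law `p(u) p(x1,x2|u) p(y1,y2|x1,x2)`,
`I(U;Y1|X1) ≤ I(U;Y2|X1)`. -/
theorem mixed_chain_aux_CMI_ineq {U : Type} [Fintype U] [DecidableEq U] {A1 A2 B1 B2 : Type} [Fintype A1] [DecidableEq A1] [Fintype A2] [DecidableEq A2]
    [Fintype B1] [DecidableEq B1] [Fintype B2] [DecidableEq B2]
    (W : A1 → A2 → B1 × B2 → ℝ) (hW : IsChannel W) (hchain : ChainX2X1Y2Y1 W)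
    (pIn : U × A1 × A2 → ℝ) (hpIn : IsPMF pIn) :
    let μ : U × A1 × A2 × B1 × B2 → ℝ :=
      fun z => pIn (z.1, z.2.1, z.2.2.1) * W z.2.1 z.2.2.1 (z.2.2.2.1, z.2.2.2.2)
    CMI μ (fun z => z.1) (fun z => z.2.2.2.1) (fun z => z.2.1)
      ≤ CMI μ (fun z => z.1) (fun z => z.2.2.2.2) (fun z => z.2.1) := by
  intro μ
  exact main_aux W hW hchain pIn hpIn

end IT
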